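/- Let G = (V, E) be a compact topological packing graph with V ⊆ ℝ^n compact. Suppose there exist λ⁺ ∈ ℝ and a kernel K⁺ ∈ int COP(V) with K⁺(v,v) = λ⁺ − 1 for all v ∈ V and K⁺(u,v) = −1 for all (u,v) ∉ E. Then the sequence (γ_r(G))_{r ∈ ℕ} is nonincreasing and converges to the stability number α(G) as r → ∞. -/

import Mathlib

noncomputable section

open Filter Topology

/-- The `r`-stack of a `d`-tensor `T`: `Stk^r(T)(u, w) = T(u)`. -/
def stk {α : Type*} (d r : ℕ) (T : (Fin d → α) → ℝ) : (Fin (d + r) → α) → ℝ :=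
  fun v => T fun i => v (Fin.castAdd r i)

/-- The symmetrization of a `d`-tensor:
`σ(T)(v) = (1/d!) ∑_{π ∈ Sym(d)} T(v ∘ π)`. -/
def tsym {α : Type*} (d : ℕ) (T : (Fin d → α) → ℝ) : (Fin d → α) → ℝ :=
  fun v => (d.factorial : ℝ)⁻¹ * ∑ π : Equiv.Perm (Fin d), T (v ∘ π)

/-- A symmetric two-variable function identified with a `2`-tensor. -/
def kerTensor {X : Type*} (K : X → X → ℝ) : (Fin 2 → X) → ℝ :=
  fun v => K (v 0) (v 1)

/-- A kernel: a continuous symmetric real-valued function of two variables. -/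
def IsKernel {X : Type*} [TopologicalSpace X] (K : X → X → ℝ) : Prop :=
  Continuous (fun p : X × X => K p.1 p.2) ∧ ∀ x y, K x y = K y x

/-- Positive semidefiniteness of a two-variable function. -/
def IsPSDKernel {X : Type*} (K : X → X → ℝ) : Prop :=
  ∀ (k : ℕ) (v : Fin k → X) (x : Fin k → ℝ),
    0 ≤ ∑ i, ∑ j, K (v i) (v j) * x i * x j

/-- Copositivity of a two-variable function. -/
def IsCopositiveKernel {X : Type*} (K : X → X → ℝ) : Prop :=
  ∀ (k : ℕ) (v : Fin k → X) (x : Fin k → ℝ), (∀ i, 0 ≤ x i) →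
    0 ≤ ∑ i, ∑ j, K (v i) (v j) * x i * x j

/-- An `(r+2)`-tensor `S` is 2-PSD if it is continuous and every slice
`(x, y) ↦ S(x, y, z)` is a PSD kernel. -/
def Is2PSD {X : Type*} [TopologicalSpace X] (r : ℕ)
    (S : (Fin (2 + r) → X) → ℝ) : Prop :=
  Continuous S ∧ ∀ z : Fin r → X, IsPSDKernel fun x y => S (Fin.append ![x, y] z)

/-- The tensor condition defining `C_r`: `σ(Stk^r M) = σ(N)` for some
nonnegative `(r+2)`-tensor `N`. -/
def CrCond {X : Type*} (r : ℕ) (M : X → X → ℝ) : Prop :=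
  ∃ N : (Fin (2 + r) → X) → ℝ, (∀ v, 0 ≤ N v) ∧
    tsym (2 + r) (stk 2 r (kerTensor M)) = tsym (2 + r) N

/-- Membership in `C_r`: a kernel satisfying the `C_r` tensor condition. -/
def memCr {X : Type*} [TopologicalSpace X] (r : ℕ) (M : X → X → ℝ) : Prop :=
  IsKernel M ∧ CrCond r M

/-- Membership in `Q_r`: a kernel `M` with `σ(Stk^r M) = σ(N) + σ(S)` for some
nonnegative `(r+2)`-tensor `N` and 2-PSD `(r+2)`-tensor `S`. -/
def memQr {X : Type*} [TopologicalSpace X] (r : ℕ) (M : X → X → ℝ) : Prop :=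
  IsKernel M ∧ ∃ N S : (Fin (2 + r) → X) → ℝ, (∀ v, 0 ≤ N v) ∧ Is2PSD r S ∧
    tsym (2 + r) (stk 2 r (kerTensor M)) =
      fun v => tsym (2 + r) N v + tsym (2 + r) S v

/-- The space of kernels on `V`, i.e. symmetric continuous functions on
`V × V`, with the topology of `C(V × V, ℝ)` (for `V` compact this is the
supremum-norm topology). -/
def KernelSpace {n : ℕ} (V : Set (Fin n → ℝ)) : Type _ :=
  {K : C(↥V × ↥V, ℝ) // ∀ x y, K (x, y) = K (y, x)}

instance {n : ℕ} (V : Set (Fin n → ℝ)) : TopologicalSpace (KernelSpace V) :=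
  instTopologicalSpaceSubtype

/-- `COP(V)` as a subset of the space of kernels on `V`. -/
def COPSet {n : ℕ} (V : Set (Fin n → ℝ)) : Set (KernelSpace V) :=
  {K | IsCopositiveKernel fun x y => K.1 (x, y)}

/-- The stability number: maximum cardinality of a finite stable set. -/
def stabilityNumber {n : ℕ} (V : Set (Fin n → ℝ)) (E : Set (↥V × ↥V)) : ℕ :=
  sSup {k : ℕ | ∃ S : Finset ↥V,
    (∀ u ∈ S, ∀ v ∈ S, u ≠ v → (u, v) ∉ E) ∧ S.card = k}

/-- `γ_r(G) ∈ ℝ ∪ {+∞}`: the infimum of `λ ∈ ℝ` over pairs `(K, λ)` with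
`K ∈ C_r^V`, `K(v,v) = λ - 1` on the diagonal and `K(u,v) = -1` on non-edges. -/
def gammaVal {n : ℕ} (V : Set (Fin n → ℝ)) (E : Set (↥V × ↥V)) (r : ℕ) : EReal :=
  sInf {x : EReal | ∃ l : ℝ, x = (l : EReal) ∧ ∃ K : ↥V → ↥V → ℝ,
    memCr r K ∧ (∀ v, K v v = l - 1) ∧ ∀ u v : ↥V, (u, v) ∉ E → K u v = -1}

/-- `ν_r(G) ∈ ℝ ∪ {+∞}`: as `γ_r(G)` but with `Q_r^V` in place of `C_r^V`. -/
def nuVal {n : ℕ} (V : Set (Fin n → ℝ)) (E : Set (↥V × ↥V)) (r : ℕ) : EReal :=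
  sInf {x : EReal | ∃ l : ℝ, x = (l : EReal) ∧ ∃ K : ↥V → ↥V → ℝ,
    memQr r K ∧ (∀ v, K v v = l - 1) ∧ ∀ u v : ↥V, (u, v) ∉ E → K u v = -1}

namespace Stmt9Aux

open Finset

variable {X : Type*}

/-- The pointwise reformulation of the `C_r` condition. -/
def QQ (m : ℕ) (K : X → X → ℝ) : Prop :=
  ∀ v : Fin m → X, ∑ i, K (v i) (v i) ≤ ∑ i, ∑ j, K (v i) (v j)

lemma sum_offDiag {m : ℕ} (f : Fin m → Fin m → ℝ) :
    ∑ p ∈ (univ : Finset (Fin m)).offDiag, f p.1 p.2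
      = (∑ i, ∑ j, f i j) - ∑ i, f i i := by
  have h := Finset.diag_union_offDiag (univ : Finset (Fin m))
  have hd : Disjoint (univ : Finset (Fin m)).diag univ.offDiag :=
    Finset.disjoint_diag_offDiag _
  have h2 : ∑ p ∈ (univ : Finset (Fin m)).diag ∪ univ.offDiag, f p.1 p.2
      = ∑ p ∈ ((univ : Finset (Fin m)) ×ˢ univ), f p.1 p.2 := by rw [h]
  rw [Finset.sum_union hd] at h2
  rw [Finset.sum_product' (f := fun i j => f i j)] at h2
  rw [Finset.sum_diag (f := fun p => f p.1 p.2)] at h2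
  simp only at h2
  linarith

lemma exists_perm_sum (m : ℕ) (e0 e1 : Fin m) (h01 : e0 ≠ e1) :
    ∃ c : ℕ, 0 < c ∧ ∀ f : Fin m → Fin m → ℝ,
      ∑ π : Equiv.Perm (Fin m), f (π e0) (π e1)
        = c • ∑ p ∈ (univ : Finset (Fin m)).offDiag, f p.1 p.2 := by
  classical
  set F : Equiv.Perm (Fin m) → Fin m × Fin m := fun π => (π e0, π e1) with hF
  have hmaps : ∀ π : Equiv.Perm (Fin m), π ∈ (univ : Finset (Equiv.Perm (Fin m))) →
      F π ∈ (univ : Finset (Fin m)).offDiag := by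
    intro π _
    simp only [Finset.mem_offDiag, F]
    exact ⟨mem_univ _, mem_univ _, fun h => h01 (π.injective h)⟩
  set c : ℕ := ((univ : Finset (Equiv.Perm (Fin m))).filter fun π => F π = (e0, e1)).card with hc
  have hcpos : 0 < c := by
    rw [hc]
    apply Finset.card_pos.2
    exact ⟨1, by simp [F]⟩
  -- all fibers have the same cardinality
  have hfib : ∀ p ∈ (univ : Finset (Fin m)).offDiag,
      ((univ : Finset (Equiv.Perm (Fin m))).filter fun π => F π = p).card = c := by
    rintro ⟨i, j⟩ hp
    simp only [Finset.mem_offDiag] at hp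
    obtain ⟨-, -, hij⟩ := hp
    -- a permutation sending e0 ↦ i, e1 ↦ j
    set σ : Equiv.Perm (Fin m) :=
      (Equiv.swap e0 i).trans (Equiv.swap ((Equiv.swap e0 i) e1) j) with hσ
    have hne : (Equiv.swap e0 i) e1 ≠ i := by
      intro h
      have h2 : (Equiv.swap e0 i) e1 = (Equiv.swap e0 i) e0 := by
        rw [h, Equiv.swap_apply_left]
      exact h01 ((Equiv.swap e0 i).injective h2).symm
    have hσ0 : σ e0 = i := by
      have : σ e0 = (Equiv.swap ((Equiv.swap e0 i) e1) j) i := by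
        simp only [hσ, Equiv.trans_apply, Equiv.swap_apply_left]
      rw [this]
      exact Equiv.swap_apply_of_ne_of_ne (Ne.symm hne) hij
    have hσ1 : σ e1 = j := by
      simp only [hσ, Equiv.trans_apply, Equiv.swap_apply_left]
    rw [hc]
    apply Finset.card_bij (fun τ _ => τ.trans σ.symm)
    · intro τ hτ
      simp only [Finset.mem_filter, mem_univ, true_and, F, Prod.mk.injEq] at hτ ⊢
      constructor
      · rw [Equiv.trans_apply, hτ.1, Equiv.symm_apply_eq, hσ0]
      · rw [Equiv.trans_apply, hτ.2, Equiv.symm_apply_eq, hσ1]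
    · intro τ1 h1 τ2 h2 h
      have : ∀ x, τ1 x = τ2 x := by
        intro x
        have := congrArg (fun e : Equiv.Perm (Fin m) => e x) h
        simp only [Equiv.trans_apply] at this
        exact σ.symm.injective this
      exact Equiv.ext this
    · intro π hπ
      simp only [Finset.mem_filter, mem_univ, true_and, F, Prod.mk.injEq] at hπ
      refine ⟨π.trans σ, ?_, ?_⟩
      · simp only [Finset.mem_filter, mem_univ, true_and, F, Prod.mk.injEq,
          Equiv.trans_apply, hπ.1, hπ.2, hσ0, hσ1]
      · ext x
        simp [Equiv.trans_apply]
  refine ⟨c, hcpos, fun f => ?_⟩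
  rw [← Finset.sum_fiberwise_of_maps_to hmaps (fun π => f (π e0) (π e1))]
  rw [Finset.smul_sum]
  refine Finset.sum_congr rfl fun p hp => ?_
  have hcon : ∀ π ∈ (univ : Finset (Equiv.Perm (Fin m))).filter fun π => F π = p,
      f (π e0) (π e1) = f p.1 p.2 := by
    intro π hπ
    simp only [Finset.mem_filter, F] at hπ
    rw [← hπ.2]
  rw [Finset.sum_congr rfl hcon, Finset.sum_const, hfib p hp]

lemma tsym_comp_perm {d : ℕ} (T : (Fin d → X) → ℝ) (v : Fin d → X) (π : Equiv.Perm (Fin d)) :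
    tsym d T (v ∘ π) = tsym d T v := by
  unfold tsym
  congr 1
  have h := Equiv.sum_comp (Equiv.mulLeft π) (fun τ : Equiv.Perm (Fin d) => T (v ∘ τ))
  rw [← h]
  refine Finset.sum_congr rfl fun τ _ => ?_
  congr 1

lemma tsym_idem {d : ℕ} (T : (Fin d → X) → ℝ) : tsym d (tsym d T) = tsym d T := by
  funext v
  have h1 : tsym d (tsym d T) v
      = (d.factorial : ℝ)⁻¹ * ∑ π : Equiv.Perm (Fin d), tsym d T (v ∘ π) := rfl
  rw [h1, Finset.sum_congr rfl fun π _ => tsym_comp_perm T v π, Finset.sum_const]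
  simp only [card_univ, Fintype.card_perm, Fintype.card_fin, nsmul_eq_mul]
  rw [← mul_assoc, inv_mul_cancel₀ (by exact_mod_cast (Nat.factorial_pos d).ne'), one_mul]

lemma crCond_iff_QQ (r : ℕ) (K : X → X → ℝ) : CrCond r K ↔ QQ (2 + r) K := by
  classical
  set e0 : Fin (2 + r) := Fin.castAdd r 0 with he0
  set e1 : Fin (2 + r) := Fin.castAdd r 1 with he1
  have h01 : e0 ≠ e1 := by
    simp [he0, he1, Fin.ext_iff]
  obtain ⟨c, hcpos, hsum⟩ := exists_perm_sum (2 + r) e0 e1 h01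
  have heval : ∀ v : Fin (2 + r) → X,
      tsym (2 + r) (stk 2 r (kerTensor K)) v
        = ((2 + r).factorial : ℝ)⁻¹ *
          (c • ((∑ i, ∑ j, K (v i) (v j)) - ∑ i, K (v i) (v i))) := by
    intro v
    have h2 : tsym (2 + r) (stk 2 r (kerTensor K)) v
        = ((2 + r).factorial : ℝ)⁻¹ *
          ∑ π : Equiv.Perm (Fin (2 + r)), K (v (π e0)) (v (π e1)) := rfl
    rw [h2, hsum (fun i j => K (v i) (v j)),
      sum_offDiag (f := fun i j => K (v i) (v j))]
  have hfpos : (0:ℝ) < ((2 + r).factorial : ℝ) := by exact_mod_cast Nat.factorial_pos _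
  constructor
  · rintro ⟨N, hN, heq⟩ v
    have h3 : 0 ≤ tsym (2 + r) (stk 2 r (kerTensor K)) v := by
      rw [heq]
      exact mul_nonneg (inv_nonneg.2 hfpos.le) (Finset.sum_nonneg fun π _ => hN _)
    rw [heval v] at h3
    rw [nsmul_eq_mul] at h3
    have h4 := (mul_nonneg_iff_of_pos_left (inv_pos.2 hfpos)).mp h3
    have h5 := (mul_nonneg_iff_of_pos_left (by exact_mod_cast hcpos : (0:ℝ) < (c:ℕ))).mp h4
    linarith
  · intro hQQ
    refine ⟨tsym (2 + r) (stk 2 r (kerTensor K)), fun v => ?_, (tsym_idem _).symm⟩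
    rw [heval v, nsmul_eq_mul]
    have := sub_nonneg.2 (hQQ v)
    positivity

lemma QQ_succ {m : ℕ} (hm : 2 ≤ m) (K : X → X → ℝ) (h : QQ m K) : QQ (m + 1) K := by
  intro v
  have h1 : ∀ g : Fin (m + 1) → ℝ, ∀ k : Fin (m + 1),
      ∑ i : Fin m, g (k.succAbove i) = (∑ i, g i) - g k := by
    intro g k
    rw [Fin.sum_univ_succAbove g k]
    ring
  set G := ∑ i : Fin (m+1), ∑ j : Fin (m+1), K (v i) (v j) with hG
  set D := ∑ i : Fin (m+1), K (v i) (v i) with hD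
  have hrow : ∀ k : Fin (m+1),
      ∑ i : Fin m, ∑ j : Fin m, K (v (k.succAbove i)) (v (k.succAbove j))
        = G - (∑ j, K (v k) (v j)) - (∑ i, K (v i) (v k)) + K (v k) (v k) := by
    intro k
    have hin : ∀ i' : Fin (m+1), ∑ j : Fin m, K (v i') (v (k.succAbove j))
        = (∑ j', K (v i') (v j')) - K (v i') (v k) :=
      fun i' => h1 (fun j' => K (v i') (v j')) k
    calc ∑ i : Fin m, ∑ j : Fin m, K (v (k.succAbove i)) (v (k.succAbove j))
        = ∑ i : Fin m, ((∑ j', K (v (k.succAbove i)) (v j')) - K (v (k.succAbove i)) (v k)) :=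
          Finset.sum_congr rfl fun i _ => hin _
      _ = (∑ i : Fin m, (∑ j', K (v (k.succAbove i)) (v j')))
            - ∑ i : Fin m, K (v (k.succAbove i)) (v k) := Finset.sum_sub_distrib _ _
      _ = ((∑ i', ∑ j', K (v i') (v j')) - ∑ j', K (v k) (v j'))
            - ((∑ i', K (v i') (v k)) - K (v k) (v k)) := by
          rw [h1 (fun i' => ∑ j', K (v i') (v j')) k, h1 (fun i' => K (v i') (v k)) k]
      _ = G - (∑ j, K (v k) (v j)) - (∑ i, K (v i) (v k)) + K (v k) (v k) := by
          rw [← hG]; ring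
  have hdiag : ∀ k : Fin (m+1),
      ∑ i : Fin m, K (v (k.succAbove i)) (v (k.succAbove i)) = D - K (v k) (v k) :=
    fun k => h1 (fun i' => K (v i') (v i')) k
  have hkk : ∀ k : Fin (m+1), D - K (v k) (v k)
      ≤ G - (∑ j, K (v k) (v j)) - (∑ i, K (v i) (v k)) + K (v k) (v k) := by
    intro k
    rw [← hrow k, ← hdiag k]
    exact h (v ∘ k.succAbove)
  have hsum := Finset.sum_le_sum (fun k (_ : k ∈ (univ : Finset (Fin (m+1)))) => hkk k)
  have hL : ∑ k : Fin (m+1), (D - K (v k) (v k)) = (m+1) * D - D := by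
    rw [Finset.sum_sub_distrib, Finset.sum_const, ← hD]
    simp only [card_univ, Fintype.card_fin, Fintype.card_prod, nsmul_eq_mul]
    push_cast
    ring
  have hR : ∑ k : Fin (m+1),
      (G - (∑ j, K (v k) (v j)) - (∑ i, K (v i) (v k)) + K (v k) (v k))
        = (m+1) * G - G - G + D := by
    have e1 : ∑ k : Fin (m+1), ∑ j, K (v k) (v j) = G := rfl
    have e2 : ∑ k : Fin (m+1), ∑ i, K (v i) (v k) = G := by
      rw [Finset.sum_comm]
    rw [Finset.sum_add_distrib, Finset.sum_sub_distrib, Finset.sum_sub_distrib,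
      Finset.sum_const, e1, e2, ← hD]
    simp only [card_univ, Fintype.card_fin, Fintype.card_prod, nsmul_eq_mul]
    push_cast
    ring
  rw [hL, hR] at hsum
  have hm' : (2:ℝ) ≤ (m:ℝ) := by exact_mod_cast hm
  have hpos : (0:ℝ) < (m:ℝ) - 1 := by linarith
  have key : ((m:ℝ) - 1) * D ≤ ((m:ℝ) - 1) * G := by nlinarith [hsum]
  exact le_of_mul_le_mul_left key hpos

lemma QQ_mono {m m' : ℕ} (hm : 2 ≤ m) (hmm : m ≤ m') (K : X → X → ℝ)
    (h : QQ m K) : QQ m' K := by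
  induction m' , hmm using Nat.le_induction with
  | base => exact h
  | succ n hn ih => exact QQ_succ (le_trans hm hn) K ih

lemma lower_bound_feasible {a q : ℕ} (ha : 1 ≤ a) (hq : 2 ≤ q) (K : X → X → ℝ) (l : ℝ)
    (h : QQ (a * q) K) (w : Fin a → X)
    (hdiag : ∀ s, K (w s) (w s) = l - 1)
    (hoff : ∀ s t, s ≠ t → K (w s) (w t) = -1) :
    (a : ℝ) ≤ l := by
  classical
  set v : Fin (a * q) → X := fun i => w (finProdFinEquiv.symm i).1 with hv
  have hKst : ∀ s t : Fin a, K (w s) (w t) = if s = t then l - 1 else -1 := by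
    intro s t
    by_cases hst : s = t
    · simp [hst, hdiag]
    · simp [hst, hoff s t hst]
  have hrowsum : ∀ s : Fin a, ∑ t : Fin a, K (w s) (w t) = l - (a:ℝ) := by
    intro s
    rw [Finset.sum_congr rfl fun t _ => hKst s t]
    have : ∀ t : Fin a, (if s = t then l - 1 else -1) = (if s = t then l else 0) + (-1) := by
      intro t; by_cases hst : s = t <;> simp [hst] <;> ring
    rw [Finset.sum_congr rfl fun t _ => this t, Finset.sum_add_distrib,
      Finset.sum_ite_eq, Finset.sum_const]
    simp only [card_univ, Fintype.card_fin, Fintype.card_prod, nsmul_eq_mul,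
      Finset.mem_univ, if_true]
    push_cast
    ring
  have hprod : ∀ F : Fin (a * q) → ℝ,
      ∑ i, F i = ∑ p : Fin a × Fin q, F (finProdFinEquiv p) :=
    fun F => (Equiv.sum_comp finProdFinEquiv F).symm
  have hveq : ∀ p : Fin a × Fin q, v (finProdFinEquiv p) = w p.1 := by
    intro p
    show w ((finProdFinEquiv.symm (finProdFinEquiv p)).1) = w p.1
    rw [Equiv.symm_apply_apply]
  have hG : ∑ i, ∑ j, K (v i) (v j) = (q:ℝ) * ((q:ℝ) * ((a:ℝ) * (l - (a:ℝ)))) := by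
    rw [hprod (fun i => ∑ j, K (v i) (v j))]
    have : ∀ p : Fin a × Fin q, ∑ j, K (v (finProdFinEquiv p)) (v j)
        = (q:ℝ) * (l - (a:ℝ)) := by
      intro p
      rw [hprod (fun j => K (v (finProdFinEquiv p)) (v j))]
      rw [Finset.sum_congr rfl fun p' _ => by rw [hveq p, hveq p']]
      rw [Fintype.sum_prod_type]
      rw [Finset.sum_congr rfl fun s (_ : s ∈ univ) => (Finset.sum_const (K (w p.1) (w s)))]
      have : ∑ s : Fin a, (Finset.univ (α := Fin q)).card • K (w p.1) (w s)
          = (q:ℝ) * ∑ s : Fin a, K (w p.1) (w s) := by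
        simp only [card_univ, Fintype.card_fin, nsmul_eq_mul, Finset.mul_sum]
      rw [this, hrowsum p.1]
    rw [Finset.sum_congr rfl fun p _ => this p, Finset.sum_const]
    simp only [card_univ, Fintype.card_fin, Fintype.card_prod, nsmul_eq_mul]
    push_cast
    ring
  have hH : ∑ i, K (v i) (v i) = ((a:ℝ) * (q:ℝ)) * (l - 1) := by
    rw [hprod (fun i => K (v i) (v i))]
    rw [Finset.sum_congr rfl fun p _ => by rw [hveq p, hdiag p.1]]
    rw [Finset.sum_const]
    simp only [card_univ, Fintype.card_fin, Fintype.card_prod, nsmul_eq_mul]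
    push_cast
    ring
  have hineq := h v
  rw [hG, hH] at hineq
  have ha' : (1:ℝ) ≤ (a:ℝ) := by exact_mod_cast ha
  have hq' : (2:ℝ) ≤ (q:ℝ) := by exact_mod_cast hq
  have hpos : (0:ℝ) < (a:ℝ) * (q:ℝ) := by nlinarith
  have h2 : l - 1 ≤ (q:ℝ) * (l - (a:ℝ)) := by
    have h3 : ((a:ℝ) * (q:ℝ)) * (l - 1) ≤ ((a:ℝ) * (q:ℝ)) * ((q:ℝ) * (l - (a:ℝ))) := by
      nlinarith [hineq]
    exact le_of_mul_le_mul_left h3 hpos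
  have hq1 : (0:ℝ) < (q:ℝ) - 1 := by linarith
  have h3 : ((q:ℝ) - 1) * (a:ℝ) ≤ ((q:ℝ) - 1) * l := by nlinarith
  exact le_of_mul_le_mul_left h3 hq1

section MS

variable {ι : Type*} [Fintype ι] [DecidableEq ι]

lemma collapse (i j : ι) (hij : i ≠ j) (g : ι → ℝ) :
    ∑ k, (if k = i then (1:ℝ) else if k = j then -1 else 0) * g k = g i - g j := by
  have hpt : ∀ k, (if k = i then (1:ℝ) else if k = j then -1 else 0) * g k
      = (if k = i then g k else 0) + (if k = j then -g k else 0) := by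
    intro k
    by_cases h1 : k = i
    · subst h1
      simp [hij]
    · by_cases h2 : k = j
      · subst h2
        simp [h1]
      · simp [h1, h2]
  rw [Finset.sum_congr rfl fun k _ => hpt k, Finset.sum_add_distrib,
    Finset.sum_ite_eq', Finset.sum_ite_eq']
  simp
  ring

lemma motzkin_straus (Adj : ι → ι → Prop) [DecidableRel Adj]
    (hsymm : ∀ i j, Adj i j → Adj j i) (a : ℕ)
    (hstab : ∀ S : Finset ι, (∀ i ∈ S, ∀ j ∈ S, i ≠ j → ¬ Adj i j) → S.card ≤ a)
    (y : ι → ℝ) (hy : ∀ i, 0 ≤ y i) :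
    (∑ i, y i)^2 ≤ (a:ℝ) * ∑ i, ∑ j, (if i = j ∨ Adj i j then (1:ℝ) else 0) * y i * y j := by
  set w : ι → ι → ℝ := fun i j => if i = j ∨ Adj i j then (1:ℝ) else 0 with hw
  have hwsymm : ∀ i j, w i j = w j i := by
    intro i j
    simp only [hw]
    by_cases h : i = j ∨ Adj i j
    · rw [if_pos h, if_pos (by rcases h with h | h; exact Or.inl h.symm; exact Or.inr (hsymm _ _ h))]
    · rw [if_neg h, if_neg (by rintro (h2 | h2); exact h (Or.inl h2.symm); exact h (Or.inr (hsymm _ _ h2)))]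
  have hwnn : ∀ i j, 0 ≤ w i j := by
    intro i j; simp only [hw]; split <;> norm_num
  have hwdiag : ∀ i, w i i = 1 := by intro i; simp [hw]
  suffices H : ∀ (k : ℕ) (y : ι → ℝ), ((univ.filter fun i => y i ≠ 0).card ≤ k) →
      (∀ i, 0 ≤ y i) → (∑ i, y i)^2 ≤ (a:ℝ) * ∑ i, ∑ j, w i j * y i * y j by
    exact H _ y le_rfl hy
  clear hy
  intro k
  induction k with
  | zero =>
    intro y hcard hy
    have hz : ∀ i, y i = 0 := by
      intro i
      by_contra hne
      have : i ∈ univ.filter fun i => y i ≠ 0 := by simp [hne]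
      have := Finset.card_pos.2 ⟨i, this⟩
      omega
    simp [hz]
  | succ k ih =>
    intro y hcard hy
    set S := univ.filter fun i => y i ≠ 0 with hS
    by_cases hstable : ∀ i ∈ S, ∀ j ∈ S, i ≠ j → ¬ Adj i j
    · -- support is stable
      have hSa : S.card ≤ a := hstab S hstable
      have hsum : ∑ i, y i = ∑ i ∈ S, y i := (Finset.sum_filter_ne_zero _).symm
      have h1 : (∑ i ∈ S, y i)^2 ≤ (S.card : ℝ) * ∑ i ∈ S, (y i)^2 :=
        sq_sum_le_card_mul_sum_sq
      have h2 : ∑ i ∈ S, (y i)^2 ≤ ∑ i, (y i)^2 :=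
        Finset.sum_le_sum_of_subset_of_nonneg (Finset.subset_univ S)
          (fun i _ _ => sq_nonneg _)
      have h3 : ∑ i, (y i)^2 ≤ ∑ i, ∑ j, w i j * y i * y j := by
        refine Finset.sum_le_sum fun i _ => ?_
        have h4 : (y i)^2 = w i i * y i * y i := by rw [hwdiag]; ring
        rw [h4]
        exact Finset.single_le_sum
          (fun j _ => mul_nonneg (mul_nonneg (hwnn i j) (hy i)) (hy j)) (mem_univ i)
      have hnn : (0:ℝ) ≤ ∑ i ∈ S, (y i)^2 := Finset.sum_nonneg fun i _ => sq_nonneg _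
      have hca : (S.card : ℝ) ≤ (a : ℝ) := by exact_mod_cast hSa
      calc (∑ i, y i)^2 = (∑ i ∈ S, y i)^2 := by rw [hsum]
        _ ≤ (S.card : ℝ) * ∑ i ∈ S, (y i)^2 := h1
        _ ≤ (a:ℝ) * ∑ i ∈ S, (y i)^2 := mul_le_mul_of_nonneg_right hca hnn
        _ ≤ (a:ℝ) * ∑ i, ∑ j, w i j * y i * y j := by
            refine mul_le_mul_of_nonneg_left (h2.trans h3) (by positivity)
    · push_neg at hstable
      obtain ⟨i0, hi0, j0, hj0, hij0, hadj0⟩ := hstable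
      set r : ι → ℝ := fun k1 => ∑ l, w k1 l * y l with hr
      have key : ∀ i j : ι, i ∈ S → j ∈ S → i ≠ j → Adj i j → r i ≤ r j →
          (∑ i, y i)^2 ≤ (a:ℝ) * ∑ i, ∑ j, w i j * y i * y j := by
        intro i j hiS hjS hij hadj hrij
        set d : ι → ℝ := fun l => if l = i then (1:ℝ) else if l = j then -1 else 0 with hd
        set y' : ι → ℝ := fun l => y l + y j * d l with hy'
        have hyi : 0 < y i := by
          have : y i ≠ 0 := by simpa [hS] using hiS
          exact lt_of_le_of_ne (hy i) (Ne.symm this)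
        have hyj : 0 < y j := by
          have : y j ≠ 0 := by simpa [hS] using hjS
          exact lt_of_le_of_ne (hy j) (Ne.symm this)
        have hy'j : y' j = 0 := by
          have hdj : d j = -1 := by
            simp only [hd]
            simp [Ne.symm hij]
          simp only [hy', hdj]
          ring
        have hy'nn : ∀ l, 0 ≤ y' l := by
          intro l
          by_cases h1 : l = i
          · subst h1
            have hdi : d l = 1 := by simp only [hd]; simp
            simp only [hy', hdi]
            nlinarith [hy l, hyj.le]
          · by_cases h2 : l = j
            · subst h2
              rw [hy'j]
            · have hdl : d l = 0 := by simp only [hd]; simp [h1, h2]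
              simp only [hy', hdl]
              simpa using hy l
        have hsupp : (univ.filter fun l => y' l ≠ 0) ⊆ S.erase j := by
          intro l hl
          simp only [Finset.mem_filter, mem_univ, true_and] at hl
          rw [Finset.mem_erase]
          constructor
          · intro h1
            exact hl (h1 ▸ hy'j)
          · rw [hS, Finset.mem_filter]
            refine ⟨mem_univ _, ?_⟩
            intro hyl
            by_cases h1 : l = i
            · exact absurd (h1 ▸ hyl) hyi.ne'
            · by_cases h2 : l = j
              · exact hl (h2 ▸ hy'j)
              · apply hl
                have hdl : d l = 0 := by simp only [hd]; simp [h1, h2]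
                simp only [hy', hdl, hyl]
                ring
        have hcard' : (univ.filter fun l => y' l ≠ 0).card ≤ k := by
          have h1 := Finset.card_le_card hsupp
          have h2 : (S.erase j).card = S.card - 1 := Finset.card_erase_of_mem hjS
          omega
        have hdsum : ∑ l, d l = 0 := by
          have h0 := collapse i j hij (fun _ => (1:ℝ))
          simp only [mul_one] at h0
          have : ∀ l, d l = (if l = i then (1:ℝ) else if l = j then -1 else 0) := by
            intro l; rw [hd]
          rw [Finset.sum_congr rfl fun l _ => this l, h0]
          ring
        have hsum' : ∑ l, y' l = ∑ l, y l := by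
          simp only [hy']
          rw [Finset.sum_add_distrib, ← Finset.mul_sum, hdsum, mul_zero, add_zero]
        have hT2 : ∑ p, ∑ q2, w p q2 * d p * y q2 = r i - r j := by
          have hin : ∀ p, ∑ q2, w p q2 * d p * y q2 = d p * r p := by
            intro p
            rw [hr, Finset.mul_sum]
            exact Finset.sum_congr rfl fun q2 _ => by ring
          rw [Finset.sum_congr rfl fun p _ => hin p]
          have : ∀ p, d p * r p = (if p = i then (1:ℝ) else if p = j then -1 else 0) * r p := by
            intro p; rw [hd]
          rw [Finset.sum_congr rfl fun p _ => this p]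
          exact collapse i j hij r
        have hT3 : ∑ p, ∑ q2, w p q2 * y p * d q2 = r i - r j := by
          rw [Finset.sum_comm]
          have hin : ∀ q2, ∑ p, w p q2 * y p * d q2 = d q2 * r q2 := by
            intro q2
            rw [hr, Finset.mul_sum]
            refine Finset.sum_congr rfl fun p _ => ?_
            rw [hwsymm p q2]
            ring
          rw [Finset.sum_congr rfl fun q2 _ => hin q2]
          have : ∀ p, d p * r p = (if p = i then (1:ℝ) else if p = j then -1 else 0) * r p := by
            intro p; rw [hd]
          rw [Finset.sum_congr rfl fun p _ => this p]
          exact collapse i j hij r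
        have hT4 : ∑ p, ∑ q2, w p q2 * d p * d q2 = 0 := by
          have hin : ∀ p, ∑ q2, w p q2 * d p * d q2 = d p * (w p i - w p j) := by
            intro p
            have h5 : ∑ q2, (if q2 = i then (1:ℝ) else if q2 = j then -1 else 0) * w p q2
                = w p i - w p j := collapse i j hij (fun q2 => w p q2)
            calc ∑ q2, w p q2 * d p * d q2
                = d p * ∑ q2, (if q2 = i then (1:ℝ) else if q2 = j then -1 else 0) * w p q2 := by
                  rw [Finset.mul_sum]
                  refine Finset.sum_congr rfl fun q2 _ => ?_
                  have : d q2 = (if q2 = i then (1:ℝ) else if q2 = j then -1 else 0) := by rw [hd]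
                  rw [this]
                  ring
              _ = d p * (w p i - w p j) := by rw [h5]
          rw [Finset.sum_congr rfl fun p _ => hin p]
          have : ∀ p, d p * (w p i - w p j)
              = (if p = i then (1:ℝ) else if p = j then -1 else 0) * (w p i - w p j) := by
            intro p; rw [hd]
          rw [Finset.sum_congr rfl fun p _ => this p,
            collapse i j hij (fun p => w p i - w p j)]
          have hwij : w i j = 1 := by simp [hw, hadj]
          have hwji : w j i = 1 := by simp [hw, hsymm _ _ hadj]
          rw [hwdiag i, hwdiag j, hwij, hwji]
          ring
        have hsplit : ∑ p, ∑ q2, w p q2 * y' p * y' q2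
            = (∑ p, ∑ q2, w p q2 * y p * y q2)
              + y j * (∑ p, ∑ q2, w p q2 * d p * y q2)
              + y j * (∑ p, ∑ q2, w p q2 * y p * d q2)
              + (y j * y j) * (∑ p, ∑ q2, w p q2 * d p * d q2) := by
          simp only [Finset.mul_sum, ← Finset.sum_add_distrib]
          refine Finset.sum_congr rfl fun p _ => Finset.sum_congr rfl fun q2 _ => ?_
          simp only [hy']
          ring
        have hfB : ∑ p, ∑ q2, w p q2 * y' p * y' q2 ≤ ∑ p, ∑ q2, w p q2 * y p * y q2 := by
          rw [hsplit, hT2, hT3, hT4]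
          have hnp : y j * (r i - r j) ≤ 0 :=
            mul_nonpos_of_nonneg_of_nonpos hyj.le (by linarith)
          linarith
        have hfin := ih y' hcard' hy'nn
        rw [hsum'] at hfin
        calc (∑ i1, y i1)^2 ≤ (a:ℝ) * ∑ p, ∑ q2, w p q2 * y' p * y' q2 := hfin
          _ ≤ (a:ℝ) * ∑ p, ∑ q2, w p q2 * y p * y q2 :=
              mul_le_mul_of_nonneg_left hfB (Nat.cast_nonneg a)
      rcases le_total (r i0) (r j0) with h | h
      · exact key i0 j0 hi0 hj0 hij0 hadj0 h
      · exact key j0 i0 hj0 hi0 (Ne.symm hij0) (hsymm _ _ hadj0) h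

end MS

section Pack

variable {n : ℕ} {V : Set (Fin n → ℝ)} {E : Set (↥V × ↥V)}

/-- Packing + compactness: nearby distinct points are adjacent. -/
lemma exists_delta (hVc : IsCompact V)
    (hpack : ∀ C : Set ↥V, C.Finite → (∀ x ∈ C, ∀ y ∈ C, x ≠ y → (x, y) ∈ E) →
      ∃ D : Set ↥V, IsOpen D ∧ (∀ x ∈ D, ∀ y ∈ D, x ≠ y → (x, y) ∈ E) ∧ C ⊆ D) :
    ∃ δ : ℝ, 0 < δ ∧ ∀ u v : ↥V, u ≠ v → dist u v < δ → (u, v) ∈ E := by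
  haveI : CompactSpace ↥V := isCompact_iff_compactSpace.mp hVc
  by_contra hcon
  push_neg at hcon
  choose u v huv hd hE using fun k : ℕ => hcon (1/(k+1)) (by positivity)
  obtain ⟨p, -, φ, hφ, hlim⟩ := IsCompact.tendsto_subseq (x := fun k => (u k, v k))
    (isCompact_univ (X := ↥V × ↥V)) (fun k => Set.mem_univ _)
  have hu : Filter.Tendsto (fun k => u (φ k)) atTop (𝓝 p.1) :=
    (continuous_fst.tendsto p).comp hlim
  have hv : Filter.Tendsto (fun k => v (φ k)) atTop (𝓝 p.2) :=
    (continuous_snd.tendsto p).comp hlim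
  have hdd : Filter.Tendsto (fun k => dist (u (φ k)) (v (φ k))) atTop (𝓝 (dist p.1 p.2)) :=
    hu.dist hv
  have h0 : Filter.Tendsto (fun k => dist (u (φ k)) (v (φ k))) atTop (𝓝 0) := by
    apply squeeze_zero (fun k => dist_nonneg) (g := fun k : ℕ => 1/(k+1))
    · intro k
      refine (hd (φ k)).le.trans ?_
      have h1 : (k:ℝ) + 1 ≤ (φ k : ℝ) + 1 := by
        have hkk : k ≤ φ k := hφ.le_apply
        have : (k:ℝ) ≤ (φ k : ℝ) := by exact_mod_cast hkk
        linarith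
      apply one_div_le_one_div_of_le (by positivity) h1
    · exact tendsto_one_div_add_atTop_nhds_zero_nat
  have hpp : p.1 = p.2 := by
    have := tendsto_nhds_unique hdd h0
    exact dist_eq_zero.mp this
  obtain ⟨D, hDo, hDc, hDs⟩ := hpack {p.1} (Set.finite_singleton _)
    (by intro x hx y hy hxy; rw [Set.mem_singleton_iff] at hx hy; exact absurd (hx.trans hy.symm) hxy)
  have hpD : p.1 ∈ D := hDs rfl
  have e1 : ∀ᶠ k in atTop, u (φ k) ∈ D := hu.eventually (hDo.mem_nhds hpD)
  have e2 : ∀ᶠ k in atTop, v (φ k) ∈ D := hv.eventually (hDo.mem_nhds (hpp ▸ hpD))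
  obtain ⟨k, hk1, hk2⟩ := (e1.and e2).exists
  exact hE (φ k) (hDc _ hk1 _ hk2 (huv (φ k)))

/-- A finite net at scale ρ. -/
lemma exists_net (hVc : IsCompact V) (ρ : ℝ) (hρ : 0 < ρ) :
    ∃ t : Finset ↥V, ∀ x : ↥V, ∃ c ∈ t, dist x c < ρ := by
  haveI : CompactSpace ↥V := isCompact_iff_compactSpace.mp hVc
  obtain ⟨t, ht⟩ := IsCompact.elim_finite_subcover (isCompact_univ (X := ↥V))
    (fun c : ↥V => Metric.ball c ρ) (fun c => Metric.isOpen_ball)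
    (fun x _ => Set.mem_iUnion.2 ⟨x, Metric.mem_ball_self hρ⟩)
  refine ⟨t, fun x => ?_⟩
  have := ht (Set.mem_univ x)
  simp only [Set.mem_iUnion, Metric.mem_ball] at this
  obtain ⟨c, hc, hd⟩ := this
  exact ⟨c, hc, hd⟩

/-- The set of cardinalities of stable sets. -/
def stabSet (V : Set (Fin n → ℝ)) (E : Set (↥V × ↥V)) : Set ℕ :=
  {k : ℕ | ∃ S : Finset ↥V,
    (∀ u ∈ S, ∀ v ∈ S, u ≠ v → (u, v) ∉ E) ∧ S.card = k}

lemma stabSet_bdd (hVc : IsCompact V) {δ : ℝ} (hδ0 : 0 < δ)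
    (hδ : ∀ u v : ↥V, u ≠ v → dist u v < δ → (u, v) ∈ E) :
    BddAbove (stabSet V E) := by
  obtain ⟨t, ht⟩ := exists_net hVc (δ/2) (by positivity)
  choose c hct hcd using ht
  refine ⟨t.card, fun k hk => ?_⟩
  obtain ⟨S, hstab, hcard⟩ := hk
  rw [← hcard]
  apply Finset.card_le_card_of_injOn c (fun x _ => hct x)
  intro x hx y hy hcxy
  by_contra hxy
  have hdxy : dist x y < δ := by
    have h1 := hcd x
    have h2 := hcd y
    calc dist x y ≤ dist x (c x) + dist (c y) y := by
          rw [hcxy]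
          exact dist_triangle _ _ _
      _ < δ/2 + δ/2 := by rw [dist_comm (c y) y]; linarith
      _ = δ := by ring
  exact hstab x (by simpa using hx) y (by simpa using hy) hxy (hδ x y hxy hdxy)

lemma stabSet_nonempty : 0 ∈ stabSet V E :=
  ⟨∅, by simp, by simp⟩

/-- There is a scale at which no `(a+1)`-point "bad configuration" exists. -/
lemma no_bad_config (hVc : IsCompact V)
    (hEsymm : ∀ u v : ↥V, (u, v) ∈ E → (v, u) ∈ E)
    (hpack : ∀ C : Set ↥V, C.Finite → (∀ x ∈ C, ∀ y ∈ C, x ≠ y → (x, y) ∈ E) →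
      ∃ D : Set ↥V, IsOpen D ∧ (∀ x ∈ D, ∀ y ∈ D, x ≠ y → (x, y) ∈ E) ∧ C ⊆ D)
    (a : ℕ)
    (hstab : ∀ S : Finset ↥V, (∀ u ∈ S, ∀ v ∈ S, u ≠ v → (u, v) ∉ E) → S.card ≤ a) :
    ∃ ρ : ℝ, 0 < ρ ∧ ¬ ∃ p : Fin (a+1) → ↥V, ∀ s t : Fin (a+1), s ≠ t →
      ∃ u v : ↥V, dist u (p s) ≤ ρ ∧ dist v (p t) ≤ ρ ∧ u ≠ v ∧ (u, v) ∉ E := by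
  haveI : CompactSpace ↥V := isCompact_iff_compactSpace.mp hVc
  by_contra hcon
  push_neg at hcon
  have hbad : ∀ k : ℕ, ∃ p : Fin (a+1) → ↥V, ∀ s t : Fin (a+1), s ≠ t →
      ∃ u v : ↥V, dist u (p s) ≤ 1/(k+1) ∧ dist v (p t) ≤ 1/(k+1) ∧ u ≠ v ∧ (u, v) ∉ E :=
    fun k => hcon (1/(k+1)) (by positivity)
  choose P hP using hbad
  have hw : ∀ (k : ℕ), ∀ s t : Fin (a+1), ∃ u v : ↥V, s ≠ t →
      dist u (P k s) ≤ 1/(k+1) ∧ dist v (P k t) ≤ 1/(k+1) ∧ u ≠ v ∧ (u, v) ∉ E := by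
    intro k s t
    by_cases hst : s = t
    · exact ⟨P k s, P k s, fun h => absurd hst h⟩
    · obtain ⟨u, v, h⟩ := hP k s t hst
      exact ⟨u, v, fun _ => h⟩
  choose U W hUW using hw
  obtain ⟨z, -, φ, hφ, hlim⟩ := IsCompact.tendsto_subseq
    (x := fun k => (P k, (U k, W k)))
    (isCompact_univ (X := (Fin (a+1) → ↥V) ×
      ((Fin (a+1) → Fin (a+1) → ↥V) × (Fin (a+1) → Fin (a+1) → ↥V))))
    (fun k => Set.mem_univ _)
  obtain ⟨Pl, Ul, Wl⟩ := z
  have hlimP : Filter.Tendsto (fun k => P (φ k)) atTop (𝓝 Pl) :=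
    (continuous_fst.tendsto _).comp hlim
  have hlimU : Filter.Tendsto (fun k => U (φ k)) atTop (𝓝 Ul) :=
    ((continuous_fst.tendsto _).comp ((continuous_snd.tendsto _).comp hlim))
  have hlimW : Filter.Tendsto (fun k => W (φ k)) atTop (𝓝 Wl) :=
    ((continuous_snd.tendsto _).comp ((continuous_snd.tendsto _).comp hlim))
  have hPs : ∀ s, Filter.Tendsto (fun k => P (φ k) s) atTop (𝓝 (Pl s)) :=
    fun s => (tendsto_pi_nhds.mp hlimP) s
  have hUs : ∀ s t, Filter.Tendsto (fun k => U (φ k) s t) atTop (𝓝 (Ul s t)) :=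
    fun s t => (tendsto_pi_nhds.mp ((tendsto_pi_nhds.mp hlimU) s)) t
  have hWs : ∀ s t, Filter.Tendsto (fun k => W (φ k) s t) atTop (𝓝 (Wl s t)) :=
    fun s t => (tendsto_pi_nhds.mp ((tendsto_pi_nhds.mp hlimW) s)) t
  have hrate : ∀ k : ℕ, (1 : ℝ)/(φ k + 1) ≤ 1/(k+1) := by
    intro k
    have h1 : (k:ℝ) + 1 ≤ (φ k : ℝ) + 1 := by
      have hkk : k ≤ φ k := hφ.le_apply
      have : (k:ℝ) ≤ (φ k : ℝ) := by exact_mod_cast hkk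
      linarith
    exact one_div_le_one_div_of_le (by positivity) h1
  have hUPl : ∀ s t : Fin (a+1), s ≠ t → Ul s t = Pl s := by
    intro s t hst
    have hdd := (hUs s t).dist (hPs s)
    have h0 : Filter.Tendsto (fun k => dist (U (φ k) s t) (P (φ k) s)) atTop (𝓝 0) := by
      apply squeeze_zero (fun k => dist_nonneg) (g := fun k : ℕ => 1/(k+1))
      · intro k
        exact ((hUW (φ k) s t hst).1).trans (hrate k)
      · exact tendsto_one_div_add_atTop_nhds_zero_nat
    exact dist_eq_zero.mp (tendsto_nhds_unique hdd h0)
  have hWPl : ∀ s t : Fin (a+1), s ≠ t → Wl s t = Pl t := by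
    intro s t hst
    have hdd := (hWs s t).dist (hPs t)
    have h0 : Filter.Tendsto (fun k => dist (W (φ k) s t) (P (φ k) t)) atTop (𝓝 0) := by
      apply squeeze_zero (fun k => dist_nonneg) (g := fun k : ℕ => 1/(k+1))
      · intro k
        exact ((hUW (φ k) s t hst).2.1).trans (hrate k)
      · exact tendsto_one_div_add_atTop_nhds_zero_nat
    exact dist_eq_zero.mp (tendsto_nhds_unique hdd h0)
  have hkey : ∀ s t : Fin (a+1), s ≠ t →
      ∀ D : Set ↥V, IsOpen D → (∀ x ∈ D, ∀ y ∈ D, x ≠ y → (x, y) ∈ E) →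
      Pl s ∈ D → Pl t ∈ D → False := by
    intro s t hst D hDo hDc hs ht2
    have e1 : ∀ᶠ k in atTop, U (φ k) s t ∈ D :=
      (hUs s t).eventually (by rw [hUPl s t hst]; exact hDo.mem_nhds hs)
    have e2 : ∀ᶠ k in atTop, W (φ k) s t ∈ D :=
      (hWs s t).eventually (by rw [hWPl s t hst]; exact hDo.mem_nhds ht2)
    obtain ⟨k, hk1, hk2⟩ := (e1.and e2).exists
    obtain ⟨-, -, hne, hnE⟩ := hUW (φ k) s t hst
    exact hnE (hDc _ hk1 _ hk2 hne)
  have hsing : ∀ s t : Fin (a+1), s ≠ t → Pl s ≠ Pl t := by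
    intro s t hst heq
    obtain ⟨D, hDo, hDc, hDs⟩ := hpack {Pl s} (Set.finite_singleton _)
      (by intro x hx y hy hxy
          rw [Set.mem_singleton_iff] at hx hy
          exact absurd (hx.trans hy.symm) hxy)
    exact hkey s t hst D hDo hDc (hDs rfl) (heq ▸ hDs rfl)
  have hPne : ∀ s t : Fin (a+1), s ≠ t → (Pl s, Pl t) ∉ E := by
    intro s t hst hmem
    have hcl : ∀ x ∈ ({Pl s, Pl t} : Set ↥V), ∀ y ∈ ({Pl s, Pl t} : Set ↥V),
        x ≠ y → (x, y) ∈ E := by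
      intro x hx y hy hxy
      rcases hx with hx | hx
      · rcases hy with hy | hy
        · exact absurd (hx.trans hy.symm) hxy
        · rw [Set.mem_singleton_iff] at hy
          rw [hx, hy]
          exact hmem
      · rcases hy with hy | hy
        · rw [Set.mem_singleton_iff] at hx
          rw [hx, hy]
          exact hEsymm _ _ hmem
        · rw [Set.mem_singleton_iff] at hx hy
          exact absurd (hx.trans hy.symm) hxy
    obtain ⟨D, hDo, hDc, hDs⟩ := hpack {Pl s, Pl t} (Set.toFinite _) hcl
    exact hkey s t hst D hDo hDc (hDs (Set.mem_insert _ _))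
      (hDs (Set.mem_insert_of_mem _ rfl))
  have hinj : Function.Injective Pl := by
    intro s t h
    by_contra hst
    exact hsing s t hst h
  have hcard : (Finset.image Pl Finset.univ).card = a + 1 := by
    rw [Finset.card_image_of_injective _ hinj, Finset.card_univ, Fintype.card_fin]
  have hstable : ∀ u ∈ Finset.image Pl Finset.univ, ∀ v ∈ Finset.image Pl Finset.univ,
      u ≠ v → (u, v) ∉ E := by
    intro u hu v hv huvne
    rw [Finset.mem_image] at hu hv
    obtain ⟨s, -, rfl⟩ := hu
    obtain ⟨t, -, rfl⟩ := hv
    exact hPne s t (fun h => huvne (congrArg Pl h))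
  have := hstab _ hstable
  omega

lemma sum_sum_mul_mul {ι : Type*} [Fintype ι] (A B : ι → ℝ) (c : ℝ) :
    ∑ i, ∑ j, A i * B j * c = (∑ i, A i) * (∑ j, B j) * c := by
  have h1 : ∀ i, ∑ j, A i * B j * c = A i * (∑ j, B j) * c := by
    intro i
    rw [← Finset.sum_mul, ← Finset.mul_sum]
  rw [Finset.sum_congr rfl fun i _ => h1 i, ← Finset.sum_mul, ← Finset.sum_mul]

lemma sum_swap4 {β ι : Type*} [Fintype β] [Fintype ι] (F : β → β → ι → ι → ℝ) :
    ∑ b : β, ∑ c : β, ∑ i : ι, ∑ j : ι, F b c i j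
      = ∑ i : ι, ∑ j : ι, ∑ b : β, ∑ c : β, F b c i j := by
  calc ∑ b : β, ∑ c : β, ∑ i : ι, ∑ j : ι, F b c i j
      = ∑ b : β, ∑ i : ι, ∑ c : β, ∑ j : ι, F b c i j :=
        Finset.sum_congr rfl fun b _ => Finset.sum_comm
    _ = ∑ i : ι, ∑ b : β, ∑ c : β, ∑ j : ι, F b c i j := Finset.sum_comm
    _ = ∑ i : ι, ∑ b : β, ∑ j : ι, ∑ c : β, F b c i j :=
        Finset.sum_congr rfl fun i _ => Finset.sum_congr rfl fun b _ => Finset.sum_comm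
    _ = ∑ i : ι, ∑ j : ι, ∑ b : β, ∑ c : β, F b c i j :=
        Finset.sum_congr rfl fun i _ => Finset.sum_comm

/-- Existence of a continuous copositive kernel witnessing `λ = a`. -/
lemma exists_Kstar (hVc : IsCompact V)
    (hEsymm : ∀ u v : ↥V, (u, v) ∈ E → (v, u) ∈ E)
    (hpack : ∀ C : Set ↥V, C.Finite → (∀ x ∈ C, ∀ y ∈ C, x ≠ y → (x, y) ∈ E) →
      ∃ D : Set ↥V, IsOpen D ∧ (∀ x ∈ D, ∀ y ∈ D, x ≠ y → (x, y) ∈ E) ∧ C ⊆ D)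
    (hloops : ∀ u : ↥V, (u, u) ∈ E)
    (a : ℕ)
    (hstab : ∀ S : Finset ↥V, (∀ u ∈ S, ∀ v ∈ S, u ≠ v → (u, v) ∉ E) → S.card ≤ a) :
    ∃ K : ↥V → ↥V → ℝ, (Continuous fun p : ↥V × ↥V => K p.1 p.2) ∧
      (∀ x y, K x y = K y x) ∧ IsCopositiveKernel K ∧
      (∀ v : ↥V, K v v = (a : ℝ) - 1) ∧
      (∀ u v : ↥V, (u, v) ∉ E → K u v = -1) := by
  classical
  haveI : CompactSpace ↥V := isCompact_iff_compactSpace.mp hVc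
  obtain ⟨δ, hδ0, hδ⟩ := exists_delta hVc hpack
  obtain ⟨ρ0, hρ00, hnb⟩ := no_bad_config hVc hEsymm hpack a hstab
  set ρ : ℝ := min ρ0 (δ/8) with hρdef
  have hρ0 : 0 < ρ := lt_min hρ00 (by positivity)
  have hρρ0 : ρ ≤ ρ0 := min_le_left _ _
  have hρδ : ρ ≤ δ/8 := min_le_right _ _
  obtain ⟨t, ht⟩ := exists_net hVc ρ hρ0
  set ι := {c : ↥V // c ∈ t} with hι
  set Adj : ι → ι → Prop := fun i j => ∀ u v : ↥V,
    dist u ↑i < ρ → dist v ↑j < ρ → u ≠ v → (u, v) ∈ E with hAdj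
  haveI : DecidableRel Adj := Classical.decRel _
  have hAdjSymm : ∀ i j, Adj i j → Adj j i := by
    intro i j h u v hu hv huv
    exact hEsymm _ _ (h v u hv hu (Ne.symm huv))
  -- adjacency from short distance between centers
  have hov : ∀ (i j : ι) (x : ↥V), dist x ↑i < ρ → dist x ↑j < ρ → Adj i j := by
    intro i j x hxi hxj u v hu hv huv
    apply hδ u v huv
    have h1 : dist u v ≤ dist u ↑i + dist (↑i : ↥V) x + dist x ↑j + dist (↑j : ↥V) v :=
      dist_triangle4 u ↑i ↑j v |>.trans (by
        have := dist_triangle (↑i : ↥V) x ↑j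
        linarith [dist_triangle (↑i : ↥V) x (↑j : ↥V)])
    have h2 : dist (↑i : ↥V) x = dist x ↑i := dist_comm _ _
    have h3 : dist (↑j : ↥V) v = dist v ↑j := dist_comm _ _
    calc dist u v ≤ dist u ↑i + dist (↑i : ↥V) x + dist x ↑j + dist (↑j : ↥V) v := h1
      _ < ρ + ρ + ρ + ρ := by rw [h2, h3]; linarith
      _ ≤ δ/8 + δ/8 + δ/8 + δ/8 := by linarith
      _ < δ := by linarith
  -- stability bound for the quotient graph
  have hHstab : ∀ S : Finset ι, (∀ i ∈ S, ∀ j ∈ S, i ≠ j → ¬ Adj i j) → S.card ≤ a := by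
    intro S hSstab
    by_contra hgt
    push_neg at hgt
    obtain ⟨S', hS'sub, hS'card⟩ := Finset.exists_subset_card_eq hgt
    have e : ↥S' ≃ Fin (a+1) := S'.equivFin.trans (finCongr hS'card)
    set q : Fin (a+1) → ι := fun s => ↑(e.symm s) with hq
    have hqinj : Function.Injective q := by
      intro s1 s2 h
      exact e.symm.injective (Subtype.ext h)
    apply hnb
    refine ⟨fun s => ↑(q s), fun s1 s2 hs => ?_⟩
    have hne : q s1 ≠ q s2 := fun h => hs (hqinj h)
    have hq1 : (q s1 : ι) ∈ S := hS'sub (e.symm s1).2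
    have hq2 : (q s2 : ι) ∈ S := hS'sub (e.symm s2).2
    have hnadj := hSstab _ hq1 _ hq2 hne
    simp only [hAdj] at hnadj
    push_neg at hnadj
    obtain ⟨u, v, hu, hv, huv, hnE⟩ := hnadj
    exact ⟨u, v, hu.le.trans hρρ0, hv.le.trans hρρ0, huv, hnE⟩
  -- the partition of unity
  set g : ι → ↥V → ℝ := fun i u => max (ρ - dist u ↑i) 0 with hg
  have hgcont : ∀ i, Continuous (g i) := fun i =>
    (continuous_const.sub (continuous_id.dist continuous_const)).max continuous_const
  have hgnn : ∀ i u, 0 ≤ g i u := fun i u => le_max_right _ _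
  have hgsupp : ∀ i u, g i u ≠ 0 → dist u ↑i < ρ := by
    intro i u h
    by_contra hge
    push_neg at hge
    apply h
    simp only [hg]
    rw [max_eq_right (by linarith)]
  set Dd : ↥V → ℝ := fun u => ∑ i, g i u with hDd
  have hDpos : ∀ u, 0 < Dd u := by
    intro u
    obtain ⟨c, hct, hcd⟩ := ht u
    apply Finset.sum_pos' (fun i _ => hgnn i u)
    refine ⟨⟨c, hct⟩, mem_univ _, ?_⟩
    simp only [hg]
    exact lt_max_of_lt_left (by simpa using sub_pos.2 hcd)
  have hDcont : Continuous Dd := continuous_finset_sum _ fun i _ => hgcont i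
  set φ : ι → ↥V → ℝ := fun i u => g i u / Dd u with hφ
  have hφcont : ∀ i, Continuous (φ i) := fun i =>
    (hgcont i).div hDcont fun u => (hDpos u).ne'
  have hφnn : ∀ i u, 0 ≤ φ i u := fun i u => div_nonneg (hgnn i u) (hDpos u).le
  have hφsum : ∀ u, ∑ i, φ i u = 1 := by
    intro u
    simp only [hφ]
    rw [← Finset.sum_div]
    exact div_self (hDpos u).ne'
  have hφsupp : ∀ i u, φ i u ≠ 0 → dist u ↑i < ρ := by
    intro i u h
    apply hgsupp i u
    intro h0
    apply h
    simp only [hφ, h0, zero_div]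
  -- the matrix
  set M : ι → ι → ℝ := fun i j => (a:ℝ) * (if i = j ∨ Adj i j then 1 else 0) - 1 with hM
  have hAdjIff : ∀ i j, (i = j ∨ Adj i j) ↔ (j = i ∨ Adj j i) := by
    have h2 : ∀ i j, (i = j ∨ Adj i j) → (j = i ∨ Adj j i) := by
      rintro i j (h | h)
      · exact Or.inl h.symm
      · exact Or.inr (hAdjSymm _ _ h)
    exact fun i j => ⟨h2 i j, h2 j i⟩
  have hMsymm : ∀ i j, M i j = M j i := by
    intro i j
    simp only [hM]
    rw [if_congr (hAdjIff i j) rfl rfl]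
  set K : ↥V → ↥V → ℝ := fun u v => ∑ i, ∑ j, φ i u * φ j v * M i j with hK
  refine ⟨K, ?_, ?_, ?_, ?_, ?_⟩
  · -- continuity
    apply continuous_finset_sum _ fun i _ => ?_
    apply continuous_finset_sum _ fun j _ => ?_
    exact (((hφcont i).comp continuous_fst).mul ((hφcont j).comp continuous_snd)).mul
      continuous_const
  · -- symmetry
    intro x y
    simp only [hK]
    rw [Finset.sum_comm]
    refine Finset.sum_congr rfl fun i _ => Finset.sum_congr rfl fun j _ => ?_
    rw [hMsymm j i]
    ring
  · -- copositivity
    intro k v x hx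
    set y : ι → ℝ := fun i => ∑ b, φ i (v b) * x b with hy
    have hynn : ∀ i, 0 ≤ y i := fun i =>
      Finset.sum_nonneg fun b _ => mul_nonneg (hφnn i (v b)) (hx b)
    have step1 : ∑ b, ∑ c, K (v b) (v c) * x b * x c
        = ∑ b, ∑ c, ∑ i, ∑ j, (φ i (v b) * x b) * (φ j (v c) * x c) * M i j := by
      refine Finset.sum_congr rfl fun b _ => Finset.sum_congr rfl fun c _ => ?_
      simp only [hK]
      rw [Finset.sum_mul, Finset.sum_mul]
      refine Finset.sum_congr rfl fun i _ => ?_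
      rw [Finset.sum_mul, Finset.sum_mul]
      exact Finset.sum_congr rfl fun j _ => by ring
    have step2 : ∑ b, ∑ c, ∑ i, ∑ j, (φ i (v b) * x b) * (φ j (v c) * x c) * M i j
        = ∑ i, ∑ j, M i j * y i * y j := by
      rw [sum_swap4]
      refine Finset.sum_congr rfl fun i _ => Finset.sum_congr rfl fun j _ => ?_
      simp only [hy]
      rw [sum_sum_mul_mul (fun b => φ i (v b) * x b) (fun c => φ j (v c) * x c) (M i j)]
      ring
    have hyy : ∑ i, ∑ j, y i * y j = (∑ i, y i) * (∑ j, y j) := by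
      have := sum_sum_mul_mul y y 1
      simp only [mul_one] at this
      exact this
    have step3 : ∑ i, ∑ j, M i j * y i * y j
        = (a:ℝ) * (∑ i, ∑ j, (if i = j ∨ Adj i j then (1:ℝ) else 0) * y i * y j)
          - (∑ i, y i) * (∑ j, y j) := by
      have hpt : ∀ i j, M i j * y i * y j
          = (a:ℝ) * ((if i = j ∨ Adj i j then (1:ℝ) else 0) * y i * y j) - y i * y j := by
        intro i j
        simp only [hM]
        ring
      rw [Finset.sum_congr rfl fun i _ => Finset.sum_congr rfl fun j _ => hpt i j]
      rw [Finset.sum_congr rfl fun i (_ : i ∈ univ) => Finset.sum_sub_distrib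
        (f := fun j => (a:ℝ) * ((if i = j ∨ Adj i j then (1:ℝ) else 0) * y i * y j))
        (g := fun j => y i * y j)]
      rw [Finset.sum_sub_distrib, hyy]
      congr 1
      rw [Finset.mul_sum]
      refine Finset.sum_congr rfl fun i _ => ?_
      rw [Finset.mul_sum]
    have hms := motzkin_straus Adj hAdjSymm a hHstab y hynn
    rw [step1, step2, step3]
    nlinarith [hms]
  · -- diagonal
    intro v
    have hterm : ∀ i j : ι, φ i v * φ j v * M i j = φ i v * φ j v * ((a:ℝ) - 1) := by
      intro i j
      by_cases h : φ i v * φ j v = 0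
      · rw [h, zero_mul, zero_mul]
      · have hi : φ i v ≠ 0 := fun h0 => h (by rw [h0, zero_mul])
        have hj : φ j v ≠ 0 := fun h0 => h (by rw [h0, mul_zero])
        have hadj : Adj i j := hov i j v (hφsupp i v hi) (hφsupp j v hj)
        simp only [hM, if_pos (Or.inr hadj)]
        ring
    simp only [hK]
    rw [Finset.sum_congr rfl fun i _ => Finset.sum_congr rfl fun j _ => hterm i j]
    have : ∑ i, ∑ j, φ i v * φ j v * ((a:ℝ) - 1)
        = (∑ i, φ i v) * (∑ j, φ j v) * ((a:ℝ) - 1) :=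
      sum_sum_mul_mul _ _ _
    rw [this, hφsum v]
    ring
  · -- non-edges
    intro u v huv
    have hune : u ≠ v := fun h => huv (h ▸ hloops u)
    have hterm : ∀ i j : ι, φ i u * φ j v * M i j = φ i u * φ j v * (-1) := by
      intro i j
      by_cases h : φ i u * φ j v = 0
      · rw [h, zero_mul, zero_mul]
      · have hi : φ i u ≠ 0 := fun h0 => h (by rw [h0, zero_mul])
        have hj : φ j v ≠ 0 := fun h0 => h (by rw [h0, mul_zero])
        have hdi := hφsupp i u hi
        have hdj := hφsupp j v hj
        have hnadj : ¬ (i = j ∨ Adj i j) := by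
          rintro (h2 | h2)
          · subst h2
            apply huv
            apply hδ u v hune
            calc dist u v ≤ dist u ↑i + dist (↑i : ↥V) v := dist_triangle _ _ _
              _ = dist u ↑i + dist v ↑i := by rw [dist_comm (↑i : ↥V) v]
              _ < ρ + ρ := by linarith
              _ ≤ δ/8 + δ/8 := by linarith
              _ < δ := by linarith
          · exact huv (h2 u v hdi hdj hune)
        simp only [hM, if_neg hnadj]
        ring
    simp only [hK]
    rw [Finset.sum_congr rfl fun i _ => Finset.sum_congr rfl fun j _ => hterm i j]
    have : ∑ i, ∑ j, φ i u * φ j v * (-1)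
        = (∑ i, φ i u) * (∑ j, φ j v) * (-1) :=
      sum_sum_mul_mul _ _ _
    rw [this, hφsum u, hφsum v]
    ring

end Pack

/-- Nonnegative combinations of copositive kernels are copositive. -/
lemma copos_combo {X : Type*} {K1 K2 : X → X → ℝ}
    (h1 : IsCopositiveKernel K1) (h2 : IsCopositiveKernel K2)
    (c1 c2 : ℝ) (hc1 : 0 ≤ c1) (hc2 : 0 ≤ c2) :
    IsCopositiveKernel (fun u v => c1 * K1 u v + c2 * K2 u v) := by
  intro k v x hx
  have e : ∑ i, ∑ j, (c1 * K1 (v i) (v j) + c2 * K2 (v i) (v j)) * x i * x j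
      = c1 * (∑ i, ∑ j, K1 (v i) (v j) * x i * x j)
        + c2 * (∑ i, ∑ j, K2 (v i) (v j) * x i * x j) := by
    rw [Finset.mul_sum, Finset.mul_sum, ← Finset.sum_add_distrib]
    refine Finset.sum_congr rfl fun i _ => ?_
    rw [Finset.mul_sum, Finset.mul_sum, ← Finset.sum_add_distrib]
    exact Finset.sum_congr rfl fun j _ => by ring
  calc (0:ℝ) ≤ c1 * (∑ i, ∑ j, K1 (v i) (v j) * x i * x j)
        + c2 * (∑ i, ∑ j, K2 (v i) (v j) * x i * x j) :=
        add_nonneg (mul_nonneg hc1 (h1 k v x hx)) (mul_nonneg hc2 (h2 k v x hx))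
    _ = _ := e.symm

/-- Uniformly strictly copositive kernels with constant diagonal satisfy `QQ m`
for large `m`. -/
lemma QQ_of_strict {X : Type*} {K : X → X → ℝ} {δ lam1 : ℝ} (hδ : 0 < δ)
    (hcop : IsCopositiveKernel (fun u v => K u v - δ))
    (hdiag : ∀ v, K v v = lam1) (m : ℕ) (hm : lam1 / δ ≤ (m:ℝ)) : QQ m K := by
  intro v
  have h1 := hcop m v (fun _ => 1) (fun _ => zero_le_one)
  simp only [mul_one] at h1
  have h2 : ∑ i : Fin m, ∑ j : Fin m, (K (v i) (v j) - δ)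
      = (∑ i, ∑ j, K (v i) (v j)) - (m:ℝ) * ((m:ℝ) * δ) := by
    rw [Finset.sum_congr rfl fun i (_ : i ∈ univ) => Finset.sum_sub_distrib
      (f := fun j => K (v i) (v j)) (g := fun _ => δ)]
    rw [Finset.sum_sub_distrib, Finset.sum_const, Finset.sum_const, card_univ,
      Fintype.card_fin, nsmul_eq_mul, nsmul_eq_mul]
  rw [h2] at h1
  have h3 : ∑ i : Fin m, K (v i) (v i) = (m:ℝ) * lam1 := by
    rw [Finset.sum_congr rfl fun i _ => hdiag (v i), Finset.sum_const, card_univ,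
      Fintype.card_fin, nsmul_eq_mul]
  rw [h3]
  have h4 : lam1 ≤ (m:ℝ) * δ := by
    rcases Nat.eq_zero_or_pos m with hm0 | hm0
    · subst hm0
      simp only [Nat.cast_zero, zero_mul]
      rw [div_le_iff₀ hδ] at hm
      simpa using hm
    · rw [div_le_iff₀ hδ] at hm
      exact hm
  have h5 : (0:ℝ) ≤ (m:ℝ) := Nat.cast_nonneg m
  nlinarith [mul_le_mul_of_nonneg_left h4 h5]

/-- Interior membership in `COP(V)` yields a uniform copositivity margin. -/
lemma interior_strict {n : ℕ} {V : Set (Fin n → ℝ)} (hVc : IsCompact V)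
    (Kp : KernelSpace V) (hKint : Kp ∈ interior (COPSet V)) :
    ∃ δ : ℝ, 0 < δ ∧ IsCopositiveKernel (fun u v : ↥V => Kp.1 (u, v) - δ) := by
  haveI : CompactSpace ↥V := isCompact_iff_compactSpace.mp hVc
  have h1 : COPSet V ∈ 𝓝 Kp := mem_interior_iff_mem_nhds.mp hKint
  obtain ⟨U, hU, hsub⟩ := (mem_nhds_subtype _ Kp _).mp h1
  obtain ⟨ε, hε, hball⟩ := Metric.mem_nhds_iff.mp hU
  set f : C(↥V × ↥V, ℝ) := Kp.1 - ContinuousMap.const _ (ε/2) with hf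
  have hfapp : ∀ p : ↥V × ↥V, f p = Kp.1 p - ε/2 := by
    intro p
    simp [hf]
  have hfsym : ∀ x y : ↥V, f (x, y) = f (y, x) := by
    intro x y
    rw [hfapp, hfapp, Kp.2 x y]
  have hfd : dist f Kp.1 ≤ ε/2 := by
    rw [ContinuousMap.dist_le (by positivity)]
    intro x
    rw [hfapp, Real.dist_eq]
    simp [abs_of_nonpos, hε.le]
    rw [abs_of_nonneg (by positivity)]
  have hfball : f ∈ Metric.ball Kp.1 ε := by
    rw [Metric.mem_ball]
    linarith [hfd]
  have hmem : (⟨f, hfsym⟩ : KernelSpace V) ∈ COPSet V := hsub (hball hfball)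
  refine ⟨ε/2, by positivity, ?_⟩
  have heq : (fun u v : ↥V => Kp.1 (u, v) - ε/2) = fun u v : ↥V => f (u, v) := by
    funext u v
    rw [hfapp]
  rw [heq]
  exact hmem

end Stmt9Aux

open Stmt9Aux

/-- for a compact topological packing graph `G = (V, E)` whose
copositive program is strictly feasible, the sequence `(γ_r(G))_r` is
nonincreasing and converges to the stability number `α(G)`. -/
theorem stmt9 (n : ℕ) (V : Set (Fin n → ℝ)) (hVne : V.Nonempty)
    (hVc : IsCompact V) (E : Set (↥V × ↥V))
    (hEsymm : ∀ u v : ↥V, (u, v) ∈ E → (v, u) ∈ E)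
    (hpack : ∀ C : Set ↥V, C.Finite → (∀ x ∈ C, ∀ y ∈ C, x ≠ y → (x, y) ∈ E) →
      ∃ D : Set ↥V, IsOpen D ∧ (∀ x ∈ D, ∀ y ∈ D, x ≠ y → (x, y) ∈ E) ∧ C ⊆ D)
    (lam : ℝ) (Kp : KernelSpace V) (hKint : Kp ∈ interior (COPSet V))
    (hKdiag : ∀ v : ↥V, Kp.1 (v, v) = lam - 1)
    (hKoff : ∀ u v : ↥V, (u, v) ∉ E → Kp.1 (u, v) = -1) :
    Antitone (fun r => gammaVal V E r) ∧
    Tendsto (fun r => gammaVal V E r) atTop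
      (𝓝 ((stabilityNumber V E : ℝ) : EReal)) := by
  classical
  haveI : CompactSpace ↥V := isCompact_iff_compactSpace.mp hVc
  have hKpcop : IsCopositiveKernel (fun u v : ↥V => Kp.1 (u, v)) :=
    interior_subset hKint
  have hloops : ∀ u : ↥V, (u, u) ∈ E := by
    intro u
    by_contra hno
    have h1 := hKpcop 1 (fun _ => u) (fun _ => 1) (fun _ => zero_le_one)
    rw [show (∑ i : Fin 1, ∑ j : Fin 1, Kp.1 ((fun _ => u) i, (fun _ => u) j)
        * (fun _ => (1:ℝ)) i * (fun _ => (1:ℝ)) j) = Kp.1 (u, u) by simp] at h1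
    rw [hKoff u u hno] at h1
    norm_num at h1
  obtain ⟨δ0, hδ00, hδ0⟩ := exists_delta hVc hpack
  have hBdd : BddAbove (stabSet V E) := stabSet_bdd hVc hδ00 hδ0
  set a : ℕ := stabilityNumber V E with ha
  have hamem : a ∈ stabSet V E := Nat.sSup_mem ⟨0, stabSet_nonempty⟩ hBdd
  have hstab : ∀ S : Finset ↥V, (∀ u ∈ S, ∀ v ∈ S, u ≠ v → (u, v) ∉ E) → S.card ≤ a :=
    fun S hS => le_csSup hBdd ⟨S, hS, rfl⟩
  have ha1 : 1 ≤ a := by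
    obtain ⟨x, hx⟩ := hVne
    have h1 : (1:ℕ) ∈ stabSet V E := by
      refine ⟨{⟨x, hx⟩}, ?_, Finset.card_singleton _⟩
      intro u hu v hv huvne
      rw [Finset.mem_singleton] at hu hv
      exact absurd (hu.trans hv.symm) huvne
    exact le_csSup hBdd h1
  obtain ⟨Ks, hKscont, hKssym, hKscop, hKsdiag, hKsoff⟩ :=
    exists_Kstar hVc hEsymm hpack hloops a hstab
  obtain ⟨δ, hδpos, hδcop⟩ := interior_strict hVc Kp hKint
  -- lower bound
  have hlow : ∀ r : ℕ, ((a:ℝ) : EReal) ≤ gammaVal V E r := by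
    intro r
    apply le_sInf
    rintro x ⟨l, rfl, K, ⟨hker, hcr⟩, hdiag, hoff⟩
    rw [EReal.coe_le_coe_iff]
    have hQ2 : QQ (2+r) K := (crCond_iff_QQ r K).mp hcr
    have hle : 2 + r ≤ a * (r + 2) := by nlinarith
    have hQ : QQ (a * (r+2)) K := QQ_mono (by omega) hle K hQ2
    obtain ⟨S, hSstab, hScard⟩ := hamem
    set e : ↥S ≃ Fin a := S.equivFin.trans (finCongr hScard) with he
    refine lower_bound_feasible ha1 (by omega) K l hQ (fun s => ↑(e.symm s))
      (fun s => hdiag _) ?_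
    intro s t hst
    have hne : (↑(e.symm s) : ↥V) ≠ ↑(e.symm t) := by
      intro hcontra
      exact hst (e.symm.injective (Subtype.ext hcontra))
    exact hoff _ _ (hSstab _ (e.symm s).2 _ (e.symm t).2 hne)
  -- upper bound
  have hup : ∀ ε : ℝ, 0 < ε → ∃ r0 : ℕ, ∀ r ≥ r0,
      gammaVal V E r ≤ (((a:ℝ) + ε : ℝ) : EReal) := by
    intro ε hε
    set tt : ℝ := min 1 (ε / (|lam - (a:ℝ)| + 1)) with htt
    have htt0 : 0 < tt := lt_min one_pos (by positivity)
    have htt1 : tt ≤ 1 := min_le_left _ _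
    set lt' : ℝ := (1 - tt) * a + tt * lam with hlt
    have hltle : lt' ≤ (a:ℝ) + ε := by
      have h1 : tt * (lam - a) ≤ tt * |lam - (a:ℝ)| :=
        mul_le_mul_of_nonneg_left (le_abs_self _) htt0.le
      have h2 : tt ≤ ε / (|lam - (a:ℝ)| + 1) := min_le_right _ _
      have h3 : tt * |lam - (a:ℝ)| ≤ ε := by
        have h5 := mul_le_mul_of_nonneg_right h2 (abs_nonneg (lam - (a:ℝ)))
        have h4 : ε / (|lam - (a:ℝ)|+1) * |lam - (a:ℝ)| ≤ ε := by
          rw [div_mul_eq_mul_div, div_le_iff₀ (by positivity)]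
          nlinarith [abs_nonneg (lam - (a:ℝ))]
        linarith
      have h6 : lt' = (a:ℝ) + tt*(lam - a) := by rw [hlt]; ring
      linarith
    set Kt : ↥V → ↥V → ℝ := fun u v => (1 - tt) * Ks u v + tt * Kp.1 (u, v) with hKt
    have hKtcop : IsCopositiveKernel (fun u v => Kt u v - tt*δ) := by
      have hcc := copos_combo hKscop hδcop (1 - tt) tt (by linarith) htt0.le
      have heqf : (fun u v : ↥V => Kt u v - tt*δ)
          = fun u v : ↥V => (1-tt) * Ks u v + tt * (Kp.1 (u,v) - δ) := by
        funext u v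
        rw [hKt]
        ring
      rw [heqf]
      exact hcc
    have hKtdiag : ∀ v, Kt v v = lt' - 1 := by
      intro v
      simp only [hKt]
      rw [hKsdiag, hKdiag, hlt]
      ring
    have hKtoff : ∀ u v : ↥V, (u,v) ∉ E → Kt u v = -1 := by
      intro u v h
      simp only [hKt]
      rw [hKsoff u v h, hKoff u v h]
      ring
    have hKtker : IsKernel Kt := by
      constructor
      · exact (continuous_const.mul hKscont).add (continuous_const.mul Kp.1.continuous)
      · intro x y
        simp only [hKt]
        rw [hKssym x y, Kp.2 x y]
    obtain ⟨m0, hm0⟩ := exists_nat_ge ((lt' - 1) / (tt * δ))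
    refine ⟨m0, fun r hr => ?_⟩
    have hQQ : QQ (2+r) Kt := by
      refine QQ_of_strict (by positivity) hKtcop hKtdiag (2+r) ?_
      refine hm0.trans ?_
      exact_mod_cast Nat.le_trans hr (by omega)
    have hmemr : memCr r Kt := ⟨hKtker, (crCond_iff_QQ r Kt).mpr hQQ⟩
    have hfeas : ((lt' : ℝ) : EReal) ∈ {x : EReal | ∃ l : ℝ, x = (l : EReal) ∧
        ∃ K : ↥V → ↥V → ℝ, memCr r K ∧ (∀ v, K v v = l - 1) ∧
          ∀ u v : ↥V, (u, v) ∉ E → K u v = -1} :=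
      ⟨lt', rfl, Kt, hmemr, hKtdiag, hKtoff⟩
    refine (sInf_le hfeas).trans ?_
    exact_mod_cast hltle
  -- antitone
  have hanti : Antitone (fun r => gammaVal V E r) := by
    apply antitone_nat_of_succ_le
    intro r
    apply sInf_le_sInf
    rintro x ⟨l, rfl, K, ⟨hker, hcr⟩, hdiag, hoff⟩
    exact ⟨l, rfl, K, ⟨hker, (crCond_iff_QQ (r+1) K).mpr
      (QQ_succ (m := 2 + r) (by omega) K ((crCond_iff_QQ r K).mp hcr))⟩, hdiag, hoff⟩
  refine ⟨hanti, ?_⟩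
  rw [tendsto_order]
  constructor
  · intro b hb
    exact Filter.Eventually.of_forall fun r => lt_of_lt_of_le hb (hlow r)
  · intro b hb
    obtain ⟨c, hc1, hc2⟩ := EReal.lt_iff_exists_real_btwn.mp hb
    have hca : (a:ℝ) < c := by exact_mod_cast hc1
    obtain ⟨r0, hr0⟩ := hup (c - a) (by linarith)
    rw [Filter.eventually_atTop]
    refine ⟨r0, fun r hr => lt_of_le_of_lt ?_ hc2⟩
    have := hr0 r hr
    rwa [show ((a:ℝ) + (c - (a:ℝ))) = c by ring] at this
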